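/- (Khavinson's theorem) Let (f_n) be a sequence of analytic functions on the open unit disk Δ with |f_n(z)| ≤ M for all z ∈ Δ and all n. If f_n converges pointwise on Δ to a (necessarily bounded analytic) function g, then the radial boundary functions f_n* converge weak-star in L^∞(T) to the boundary function g* of g, i.e., ∫_T f_n*(z)Q(z)dz → ∫_T g*(z)Q(z)dz for every Q ∈ L^1(T). -/

import Mathlib

open Complex MeasureTheory Filter Topology Metric

def IsRadialBoundary (g gstar : ℂ → ℂ) : Prop :=
  ∀ᵐ θ : ℝ, Tendsto (fun r : ℝ => g ((r : ℂ) * circleMap 0 1 θ))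
    (𝓝[<] (1 : ℝ)) (𝓝 (gstar (circleMap 0 1 θ)))

def WeakStarTo (f : ℕ → ℂ → ℂ) (h : ℂ → ℂ) : Prop :=
  ∀ Q : ℂ → ℂ,
    IntervalIntegrable (fun θ : ℝ => Q (circleMap 0 1 θ)) volume 0 (2 * Real.pi) →
    Tendsto (fun n => ∮ z in C(0, 1), f n z * Q z) atTop
      (𝓝 (∮ z in C(0, 1), h z * Q z))

section KhavinsonAux

open Set AddCircle
open scoped NNReal ENNReal

noncomputable section

open intervalIntegral in
private lemma intExpAux {c : ℂ} (hc : c ≠ 0) (a b : ℝ) :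
    (∫ x in a..b, Complex.exp (c * x)) = (Complex.exp (c * b) - Complex.exp (c * a)) / c :=
  integral_exp_mul_complex hc



private def E' (k : ℤ) (θ : ℝ) : ℂ := Complex.exp (k * θ * I)

private lemma normE (k : ℤ) (θ : ℝ) : ‖E' k θ‖ = 1 := by
  have : ((k : ℂ) * θ * I) = (((k * θ : ℝ)) : ℂ) * I := by push_cast; ring
  rw [E', this, Complex.norm_exp_ofReal_mul_I]

private lemma contE (k : ℤ) : Continuous (E' k) := by
  unfold E'
  fun_prop

private lemma intExp (c : ℤ) :
    ∫ θ in Ioc (0:ℝ) (2*Real.pi), Complex.exp ((c:ℂ)*θ*I) =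
      if c = 0 then ((2*Real.pi : ℝ):ℂ) else 0 := by
  rw [← intervalIntegral.integral_of_le (by positivity : (0:ℝ) ≤ 2*Real.pi)]
  split_ifs with hc
  · subst hc
    simp
  · have hc' : (c:ℂ) * I ≠ 0 := by
      simp [Complex.ext_iff, hc]
    have : ∀ θ : ℝ, (c:ℂ) * θ * I = (c * I) * θ := by intro θ; ring
    simp_rw [this]
    rw [intExpAux hc']
    have h2 : Complex.exp ((c:ℂ) * I * ((2*Real.pi : ℝ):ℂ)) = 1 := by
      rw [← Complex.exp_int_mul_two_pi_mul_I c]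
      push_cast
      ring_nf
    push_cast at h2 ⊢
    rw [h2]
    simp

private lemma coeff_int (f : ℂ → ℂ) (p : FormalMultilinearSeries ℂ ℂ ℂ) (t : NNReal)
    (hp : HasFPowerSeriesOnBall f p 0 t) {r : ℝ} (h0 : 0 < r) (hrt : r < t) (k : ℤ) :
    ∫ θ in Ioc (0:ℝ) (2*Real.pi), f ((r:ℂ) * circleMap 0 1 θ) * E' k θ =
      (if k ≤ 0 then ((2*Real.pi:ℝ):ℂ) * p.coeff k.natAbs else 0) * (r:ℂ) ^ k.natAbs := by
  set F : ℕ → ℝ → ℂ := fun m θ => p.coeff m * (r:ℂ)^m * Complex.exp ((((m:ℤ) + k : ℤ) : ℂ) * θ * I)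
    with hF
  have hcm : ∀ θ : ℝ, circleMap 0 1 θ = Complex.exp (θ * I) := by
    intro θ; simp [circleMap]
  have hsum : ∀ θ : ℝ, HasSum (fun m => F m θ) (f ((r:ℂ) * circleMap 0 1 θ) * E' k θ) := by
    intro θ
    have hny : ‖(r:ℂ) * circleMap 0 1 θ‖₊ < t := by
      rw [← NNReal.coe_lt_coe]
      simp only [coe_nnnorm, norm_mul, norm_circleMap_zero, Complex.norm_real, Real.norm_eq_abs,
        abs_one, mul_one, abs_of_pos h0]
      exact hrt
    have hy : (r:ℂ) * circleMap 0 1 θ ∈ Metric.eball (0:ℂ) t := by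
      rw [mem_emetric_ball_zero_iff]
      exact_mod_cast hny
    have h1 := hp.hasSum_sub hy
    simp only [sub_zero] at h1
    have h2 := h1.mul_right (E' k θ)
    have hfe : (fun m => (p m fun _ => (r:ℂ) * circleMap 0 1 θ) * E' k θ) = fun m => F m θ := by
      funext m
      rw [FormalMultilinearSeries.apply_eq_pow_smul_coeff, smul_eq_mul]
      rw [hcm, mul_pow, ← Complex.exp_nat_mul]
      rw [show ((r:ℂ)^m * Complex.exp ((m:ℂ) * (θ * I))) * p.coeff m * E' k θ
          = p.coeff m * (r:ℂ)^m * (Complex.exp ((m:ℂ) * (θ * I)) * E' k θ) from by ring]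
      rw [hF]
      simp only
      congr 1
      rw [E', ← Complex.exp_add]
      congr 1
      push_cast
      ring
    rw [hfe] at h2
    exact h2
  have hcont : ∀ m : ℕ, Continuous (F m) := by
    intro m; apply Continuous.mul continuous_const
    fun_prop
  have hint : ∀ m : ℕ, IntegrableOn (F m) (Ioc (0:ℝ) (2*Real.pi)) volume := fun m =>
    (hcont m).integrableOn_Ioc
  have hnorm : ∀ m θ, ‖F m θ‖ = ‖p.coeff m‖ * r ^ m := by
    intro m θ
    have h1 : ‖Complex.exp ((((m:ℤ) + k : ℤ):ℂ) * θ * I)‖ = 1 := normE _ θ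
    rw [hF]
    simp only [norm_mul, norm_pow, Complex.norm_real, Real.norm_eq_abs, abs_of_pos h0, h1,
      mul_one]
  have hsummable : Summable fun m => ∫ θ in Ioc (0:ℝ) (2*Real.pi), ‖F m θ‖ := by
    have hr' : ((r.toNNReal : ℝ≥0) : ℝ≥0∞) < p.radius := by
      refine lt_of_lt_of_le (ENNReal.coe_lt_coe.mpr ?_) hp.r_le
      rw [← Real.toNNReal_coe (r := t)]
      exact (Real.toNNReal_lt_toNNReal_iff_of_nonneg h0.le).mpr hrt
    have S := p.summable_norm_mul_pow hr'
    simp only [FormalMultilinearSeries.norm_apply_eq_norm_coef,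
      Real.coe_toNNReal r h0.le] at S
    have S2 := S.mul_left (2*Real.pi)
    refine S2.congr fun m => ?_
    simp only [hnorm]
    rw [setIntegral_const, Real.volume_real_Ioc, smul_eq_mul]
    rw [sub_zero, max_eq_left (by positivity)]
  have hkey := hasSum_integral_of_summable_integral_norm (μ := volume.restrict (Ioc (0:ℝ) (2*Real.pi))) hint hsummable
  have htsum : (∫ θ in Ioc (0:ℝ) (2*Real.pi), ∑' m, F m θ) =
      ∫ θ in Ioc (0:ℝ) (2*Real.pi), f ((r:ℂ) * circleMap 0 1 θ) * E' k θ := by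
    apply integral_congr_ae
    filter_upwards with θ
    exact (hsum θ).tsum_eq
  rw [htsum] at hkey
  have hterm : ∀ m : ℕ, (∫ θ in Ioc (0:ℝ) (2*Real.pi), F m θ) =
      p.coeff m * (r:ℂ)^m * (if ((m:ℤ) + k) = 0 then ((2*Real.pi : ℝ):ℂ) else 0) := by
    intro m
    rw [hF]
    simp only
    rw [integral_const_mul, intExp ((m:ℤ) + k)]
  simp_rw [hterm] at hkey
  by_cases hk : k ≤ 0
  · set m₀ := k.natAbs with hm₀
    have hm₀' : ((m₀:ℤ)) + k = 0 := by omega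
    have heq : (fun m => p.coeff m * (r:ℂ)^m * (if ((m:ℤ) + k) = 0 then ((2*Real.pi : ℝ):ℂ) else 0))
        = fun m => if m = m₀ then p.coeff m₀ * (r:ℂ)^m₀ * ((2*Real.pi : ℝ):ℂ) else 0 := by
      funext m
      by_cases hm : m = m₀
      · subst hm; rw [if_pos hm₀', if_pos rfl]
      · rw [if_neg (by omega), if_neg hm, mul_zero]
    rw [heq] at hkey
    have := (hasSum_ite_eq m₀ (p.coeff m₀ * (r:ℂ)^m₀ * ((2*Real.pi : ℝ):ℂ))).unique hkey
    rw [← this, if_pos hk]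
    ring
  · have heq : (fun m => p.coeff m * (r:ℂ)^m * (if ((m:ℤ) + k) = 0 then ((2*Real.pi : ℝ):ℂ) else 0))
        = fun _ => (0:ℂ) := by
      funext m
      rw [if_neg (by omega), mul_zero]
    rw [heq] at hkey
    have := hasSum_zero.unique hkey
    rw [← this, if_neg hk, zero_mul]

private lemma radial_scale (f : ℂ → ℂ) (hf : DifferentiableOn ℂ f (ball (0:ℂ) 1))
    {r : ℝ} (h0 : 0 < r) (h1 : r < 1) (k : ℤ) :
    ∫ θ in Ioc (0:ℝ) (2*Real.pi), f ((r:ℂ) * circleMap 0 1 θ) * E' k θ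
      = ((2*r : ℝ):ℂ)^k.natAbs *
        ∫ θ in Ioc (0:ℝ) (2*Real.pi), f (((1/2 : ℝ):ℂ) * circleMap 0 1 θ) * E' k θ := by
  set t : ℝ := (max r (1/2) + 1)/2 with ht
  have htr : r < t := by
    have := le_max_left r (1/2)
    simp only [ht]
    nlinarith [le_max_left r (1/2)]
  have ht2 : (1/2 : ℝ) < t := by
    nlinarith [le_max_right r (1/2), le_max_left r (1/2)]
  have ht1 : t < 1 := by
    have hm : max r (1/2) < 1 := max_lt h1 (by norm_num)
    nlinarith
  have ht0 : (0:ℝ) < t := by nlinarith [le_max_right r (1/2)]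
  have hcoe : ((t.toNNReal : ℝ≥0) : ℝ) = t := Real.coe_toNNReal t ht0.le
  have hball : closedBall (0:ℂ) ((t.toNNReal : ℝ≥0) : ℝ) ⊆ ball (0:ℂ) 1 := by
    rw [hcoe]
    exact closedBall_subset_ball ht1
  have hp := (hf.mono hball).hasFPowerSeriesOnBall (by
    rw [← Real.toNNReal_coe (r := 0)]
    exact (Real.toNNReal_lt_toNNReal_iff_of_nonneg le_rfl).mpr ht0)
  rw [coeff_int f _ t.toNNReal hp h0 (by rwa [hcoe]) k,
    coeff_int f _ t.toNNReal hp (by norm_num : (0:ℝ) < 1/2) (by rwa [hcoe]) k]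
  have h2 : ((2*r : ℝ):ℂ)^k.natAbs * (((1/2 : ℝ)):ℂ)^k.natAbs = (r:ℂ)^k.natAbs := by
    rw [← mul_pow]
    norm_num
    congr 1
    ring
  set C : ℂ := if k ≤ 0 then ((2*Real.pi:ℝ):ℂ) * (cauchyPowerSeries f 0 ↑t.toNNReal).coeff k.natAbs else 0 with hC
  rw [show ((2*r : ℝ):ℂ)^k.natAbs * (C * (((1/2 : ℝ)):ℂ)^k.natAbs)
      = C * (((2*r : ℝ):ℂ)^k.natAbs * (((1/2 : ℝ)):ℂ)^k.natAbs) from by ring, h2]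

private def ρ' (j : ℕ) : ℝ := 1 - ((j:ℝ)+2)⁻¹

private lemma ρ'_mem (j : ℕ) : 0 < ρ' j ∧ ρ' j < 1 := by
  have h2 : (0:ℝ) < (j:ℝ) + 2 := by positivity
  constructor
  · have : ((j:ℝ)+2)⁻¹ ≤ (2:ℝ)⁻¹ := by
      apply inv_anti₀ (by norm_num)
      have : (0:ℝ) ≤ (j:ℝ) := Nat.cast_nonneg j
      linarith
    simp only [ρ']
    nlinarith
  · simp only [ρ']
    have : (0:ℝ) < ((j:ℝ)+2)⁻¹ := by positivity
    linarith

private lemma ρ'_tendsto : Tendsto ρ' atTop (𝓝[<] (1:ℝ)) := by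
  apply tendsto_nhdsWithin_of_tendsto_nhds_of_eventually_within
  · have h1 : Tendsto (fun j : ℕ => ((j:ℝ)+2)) atTop atTop := by
      apply Filter.tendsto_atTop_add_const_right
      exact tendsto_natCast_atTop_atTop
    have h2 := h1.inv_tendsto_atTop
    have h3 := h2.const_sub (1:ℝ)
    rw [sub_zero] at h3
    exact h3
  · filter_upwards with j
    exact (ρ'_mem j).2

private lemma mem_ball_radial {r : ℝ} (h0 : 0 ≤ r) (h1 : r < 1) (θ : ℝ) :
    (r:ℂ) * circleMap 0 1 θ ∈ ball (0:ℂ) 1 := by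
  rw [mem_ball_zero_iff]
  simp only [norm_mul, norm_circleMap_zero, Complex.norm_real, Real.norm_eq_abs, abs_one, mul_one]
  rwa [_root_.abs_of_nonneg h0]

private lemma cont_circ (h : ℂ → ℂ) (hd : DifferentiableOn ℂ h (ball (0:ℂ) 1))
    {r : ℝ} (h0 : 0 ≤ r) (h1 : r < 1) :
    Continuous (fun θ : ℝ => h ((r:ℂ) * circleMap 0 1 θ)) := by
  apply hd.continuousOn.comp_continuous (by fun_prop) (mem_ball_radial h0 h1)

private lemma aesm_radial (h hstar : ℂ → ℂ)
    (hc : ∀ j : ℕ, AEStronglyMeasurable (fun θ : ℝ => h ((ρ' j :ℂ) * circleMap 0 1 θ))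
      (volume.restrict (Ioc (0:ℝ) (2*Real.pi))))
    (hrad : IsRadialBoundary h hstar) :
    AEStronglyMeasurable (fun θ : ℝ => hstar (circleMap 0 1 θ))
      (volume.restrict (Ioc (0:ℝ) (2*Real.pi))) := by
  apply aestronglyMeasurable_of_tendsto_ae atTop hc
  filter_upwards [ae_restrict_of_ae hrad] with θ hθ
  exact hθ.comp ρ'_tendsto

private lemma bound_radial (h hstar : ℂ → ℂ) (M : ℝ)
    (hb : ∀ z ∈ ball (0:ℂ) 1, ‖h z‖ ≤ M) (hrad : IsRadialBoundary h hstar) :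
    ∀ᵐ θ ∂(volume.restrict (Ioc (0:ℝ) (2*Real.pi))), ‖hstar (circleMap 0 1 θ)‖ ≤ M := by
  filter_upwards [ae_restrict_of_ae hrad] with θ hθ
  apply le_of_tendsto (hθ.comp ρ'_tendsto).norm
  filter_upwards with j
  exact hb _ (mem_ball_radial (ρ'_mem j).1.le (ρ'_mem j).2 θ)

private lemma tendsto_radial_int (h hstar : ℂ → ℂ) (M : ℝ)
    (hc : ∀ j : ℕ, AEStronglyMeasurable (fun θ : ℝ => h ((ρ' j :ℂ) * circleMap 0 1 θ))
      (volume.restrict (Ioc (0:ℝ) (2*Real.pi))))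
    (hb : ∀ z ∈ ball (0:ℂ) 1, ‖h z‖ ≤ M) (hrad : IsRadialBoundary h hstar)
    (R : ℝ → ℂ) (hR : IntegrableOn R (Ioc (0:ℝ) (2*Real.pi)) volume) :
    Tendsto (fun j => ∫ θ in Ioc (0:ℝ) (2*Real.pi), h ((ρ' j:ℂ) * circleMap 0 1 θ) * R θ)
      atTop (𝓝 (∫ θ in Ioc (0:ℝ) (2*Real.pi), hstar (circleMap 0 1 θ) * R θ)) := by
  apply tendsto_integral_of_dominated_convergence (fun θ => M * ‖R θ‖)
  · exact fun j => (hc j).mul hR.1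
  · exact hR.norm.const_mul M
  · intro j
    filter_upwards with θ
    rw [norm_mul]
    exact mul_le_mul_of_nonneg_right
      (hb _ (mem_ball_radial (ρ'_mem j).1.le (ρ'_mem j).2 θ)) (norm_nonneg _)
  · filter_upwards [ae_restrict_of_ae hrad] with θ hθ
    exact (hθ.comp ρ'_tendsto).mul_const (R θ)

private lemma tendsto_n_int (f : ℕ → ℂ → ℂ) (g : ℂ → ℂ) (M : ℝ)
    (hf : ∀ n, DifferentiableOn ℂ (f n) (ball (0 : ℂ) 1))
    (hbd : ∀ n, ∀ z ∈ ball (0 : ℂ) 1, ‖f n z‖ ≤ M)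
    (hconv : ∀ z ∈ ball (0 : ℂ) 1, Tendsto (fun n => f n z) atTop (𝓝 (g z)))
    {r : ℝ} (h0 : 0 ≤ r) (h1 : r < 1)
    (R : ℝ → ℂ) (hR : IntegrableOn R (Ioc (0:ℝ) (2*Real.pi)) volume) :
    Tendsto (fun n => ∫ θ in Ioc (0:ℝ) (2*Real.pi), f n ((r:ℂ) * circleMap 0 1 θ) * R θ)
      atTop (𝓝 (∫ θ in Ioc (0:ℝ) (2*Real.pi), g ((r:ℂ) * circleMap 0 1 θ) * R θ)) := by
  apply tendsto_integral_of_dominated_convergence (fun θ => M * ‖R θ‖)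
  · exact fun n => ((cont_circ (f n) (hf n) h0 h1).aestronglyMeasurable).mul hR.1
  · exact hR.norm.const_mul M
  · intro n
    filter_upwards with θ
    rw [norm_mul]
    exact mul_le_mul_of_nonneg_right (hbd n _ (mem_ball_radial h0 h1 θ)) (norm_nonneg _)
  · filter_upwards with θ
    exact (hconv _ (mem_ball_radial h0 h1 θ)).mul_const (R θ)

private lemma scale_tendsto (k : ℤ) (c : ℂ) :
    Tendsto (fun j => ((2 * ρ' j : ℝ):ℂ)^k.natAbs * c) atTop
      (𝓝 (((2:ℝ):ℂ)^k.natAbs * c)) := by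
  have h1 : Tendsto ρ' atTop (𝓝 (1:ℝ)) := ρ'_tendsto.mono_right nhdsWithin_le_nhds
  have h2 : Tendsto (fun j => ((2 * ρ' j : ℝ):ℂ)) atTop (𝓝 ((2:ℝ):ℂ)) := by
    have h3 : Tendsto (fun j => 2 * ρ' j) atTop (𝓝 (2:ℝ)) := by
      simpa using h1.const_mul (2:ℝ)
    have := (continuous_ofReal.tendsto (2:ℝ)).comp h3
    exact this
  exact ((h2.pow k.natAbs).mul_const c)

private lemma fourier_conv (M : ℝ) (f : ℕ → ℂ → ℂ) (g : ℂ → ℂ)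
    (hf : ∀ n, DifferentiableOn ℂ (f n) (ball (0 : ℂ) 1))
    (hbd : ∀ n, ∀ z ∈ ball (0 : ℂ) 1, ‖f n z‖ ≤ M)
    (hconv : ∀ z ∈ ball (0 : ℂ) 1, Tendsto (fun n => f n z) atTop (𝓝 (g z)))
    (fstar : ℕ → ℂ → ℂ) (gstar : ℂ → ℂ)
    (hfstar : ∀ n, IsRadialBoundary (f n) (fstar n))
    (hgstar : IsRadialBoundary g gstar) (k : ℤ) :
    Tendsto (fun n => ∫ θ in Ioc (0:ℝ) (2*Real.pi), fstar n (circleMap 0 1 θ) * E' k θ)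
      atTop (𝓝 (∫ θ in Ioc (0:ℝ) (2*Real.pi), gstar (circleMap 0 1 θ) * E' k θ)) := by
  have hEint : IntegrableOn (E' k) (Ioc (0:ℝ) (2*Real.pi)) volume := (contE k).integrableOn_Ioc
  have hgb : ∀ z ∈ ball (0:ℂ) 1, ‖g z‖ ≤ M := fun z hz =>
    le_of_tendsto (hconv z hz).norm (Filter.Eventually.of_forall fun n => hbd n z hz)
  have hgc : ∀ j : ℕ, AEStronglyMeasurable (fun θ : ℝ => g ((ρ' j :ℂ) * circleMap 0 1 θ))
      (volume.restrict (Ioc (0:ℝ) (2*Real.pi))) := by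
    intro j
    apply aestronglyMeasurable_of_tendsto_ae atTop
      (fun n => (cont_circ (f n) (hf n) (ρ'_mem j).1.le (ρ'_mem j).2).aestronglyMeasurable)
    filter_upwards with θ
    exact hconv _ (mem_ball_radial (ρ'_mem j).1.le (ρ'_mem j).2 θ)
  have hfc : ∀ n (j : ℕ), AEStronglyMeasurable (fun θ : ℝ => f n ((ρ' j :ℂ) * circleMap 0 1 θ))
      (volume.restrict (Ioc (0:ℝ) (2*Real.pi))) := fun n j =>
    (cont_circ (f n) (hf n) (ρ'_mem j).1.le (ρ'_mem j).2).aestronglyMeasurable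
  -- notation
  set Ak : (ℂ → ℂ) → ℝ → ℂ := fun h r =>
    ∫ θ in Ioc (0:ℝ) (2*Real.pi), h ((r:ℂ) * circleMap 0 1 θ) * E' k θ with hAk
  -- for each n : ∫ fstar n * E' = 2^na * Ak (f n) (1/2)
  have hn_eq : ∀ n, (∫ θ in Ioc (0:ℝ) (2*Real.pi), fstar n (circleMap 0 1 θ) * E' k θ)
      = ((2:ℝ):ℂ)^k.natAbs * Ak (f n) (1/2) := by
    intro n
    have lim1 := tendsto_radial_int (f n) (fstar n) M (hfc n) (hbd n) (hfstar n) (E' k) hEint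
    have lim2 : Tendsto (fun j => Ak (f n) (ρ' j)) atTop
        (𝓝 (((2:ℝ):ℂ)^k.natAbs * Ak (f n) (1/2))) := by
      have : (fun j => Ak (f n) (ρ' j)) =
          fun j => ((2 * ρ' j : ℝ):ℂ)^k.natAbs * Ak (f n) (1/2) := by
        funext j
        exact radial_scale (f n) (hf n) (ρ'_mem j).1 (ρ'_mem j).2 k
      rw [this]
      exact scale_tendsto k _
    exact tendsto_nhds_unique lim1 lim2
  -- scaling identity for g
  have hg_scale : ∀ r : ℝ, 0 < r → r < 1 →
      Ak g r = ((2*r : ℝ):ℂ)^k.natAbs * Ak g (1/2) := by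
    intro r h0 h1
    have l1 := tendsto_n_int f g M hf hbd hconv h0.le h1 (E' k) hEint
    have l2 : Tendsto (fun n => Ak (f n) r) atTop
        (𝓝 (((2*r : ℝ):ℂ)^k.natAbs * Ak g (1/2))) := by
      have heq : (fun n => Ak (f n) r) =
          fun n => ((2*r : ℝ):ℂ)^k.natAbs * Ak (f n) (1/2) := by
        funext n
        exact radial_scale (f n) (hf n) h0 h1 k
      rw [heq]
      exact (tendsto_n_int f g M hf hbd hconv (by norm_num : (0:ℝ) ≤ 1/2)
        (by norm_num) (E' k) hEint).const_mul _
    exact tendsto_nhds_unique l1 l2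
  -- ∫ gstar * E' = 2^na * Ak g (1/2)
  have hg_eq : (∫ θ in Ioc (0:ℝ) (2*Real.pi), gstar (circleMap 0 1 θ) * E' k θ)
      = ((2:ℝ):ℂ)^k.natAbs * Ak g (1/2) := by
    have lim1 := tendsto_radial_int g gstar M hgc hgb hgstar (E' k) hEint
    have lim2 : Tendsto (fun j => Ak g (ρ' j)) atTop
        (𝓝 (((2:ℝ):ℂ)^k.natAbs * Ak g (1/2))) := by
      have : (fun j => Ak g (ρ' j)) =
          fun j => ((2 * ρ' j : ℝ):ℂ)^k.natAbs * Ak g (1/2) := by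
        funext j
        exact hg_scale _ (ρ'_mem j).1 (ρ'_mem j).2
      rw [this]
      exact scale_tendsto k _
    exact tendsto_nhds_unique lim1 lim2
  simp_rw [hn_eq, hg_eq]
  exact (tendsto_n_int f g M hf hbd hconv (by norm_num : (0:ℝ) ≤ 1/2)
    (by norm_num) (E' k) hEint).const_mul _

private lemma fourier_eq (k : ℤ) (θ : ℝ) :
    @fourier (2*Real.pi) k (θ : AddCircle (2*Real.pi)) = E' k θ := by
  rw [fourier_coe_apply, E']
  congr 1
  have hπ : (Real.pi : ℂ) ≠ 0 := by
    simpa using Real.pi_ne_zero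
  push_cast
  field_simp

private lemma trig_approx (R : ℝ → ℂ)
    (hR : IntegrableOn R (Ioc (0:ℝ) (2*Real.pi)) volume) {ε : ℝ} (hε : 0 < ε) :
    ∃ c : ℤ →₀ ℂ, (∫ θ in Ioc (0:ℝ) (2*Real.pi),
        ‖R θ - ∑ k ∈ c.support, c k * E' k θ‖) < ε := by
  haveI hT : Fact (0 < 2*Real.pi) := ⟨by positivity⟩
  -- replace R by a strongly measurable representative
  have hmk := hR.aestronglyMeasurable
  set R₀ : ℝ → ℂ := hmk.mk R with hR₀
  have hR₀sm : StronglyMeasurable R₀ := hmk.stronglyMeasurable_mk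
  have haeR : R =ᵐ[volume.restrict (Ioc (0:ℝ) (2*Real.pi))] R₀ := hmk.ae_eq_mk
  have hR₀int : IntegrableOn R₀ (Ioc (0:ℝ) (2*Real.pi)) volume := hR.congr haeR
  -- lift to the circle
  set Rt : AddCircle (2*Real.pi) → ℂ := AddCircle.liftIoc (2*Real.pi) 0 R₀ with hRt
  have hRtsm : StronglyMeasurable Rt := by
    have : Rt = ((Ioc (0:ℝ) (0 + 2*Real.pi)).restrict R₀) ∘
        (AddCircle.measurableEquivIoc (2*Real.pi) 0) := rfl
    rw [this]
    exact (hR₀sm.comp_measurable measurable_subtype_coe).comp_measurable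
      (AddCircle.measurableEquivIoc (2*Real.pi) 0).measurable
  have hmkc : ∀ x : ℝ, x ∈ Ioc (0:ℝ) (0 + 2*Real.pi) → Rt ↑x = R₀ x := fun x hx =>
    AddCircle.liftIoc_coe_apply hx
  have hint1 : Integrable Rt (volume : Measure (AddCircle (2*Real.pi))) := by
    rw [← (AddCircle.measurePreserving_mk (2*Real.pi) 0).map_eq,
      integrable_map_measure]
    · simp only [zero_add]
      apply hR₀int.congr
      apply Filter.eventuallyEq_of_mem (self_mem_ae_restrict measurableSet_Ioc)
      intro x hx
      exact (hmkc x (by simpa using hx)).symm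
    · rw [(AddCircle.measurePreserving_mk (2*Real.pi) 0).map_eq]
      exact hRtsm.aestronglyMeasurable
    · exact AddCircle.measurable_mk'.aemeasurable
  have hμ : (haarAddCircle : Measure (AddCircle (2*Real.pi)))
      = (ENNReal.ofReal (2*Real.pi))⁻¹ • (volume : Measure (AddCircle (2*Real.pi))) := by
    rw [AddCircle.volume_eq_smul_haarAddCircle, smul_smul,
      ENNReal.inv_mul_cancel (ENNReal.ofReal_pos.mpr hT.out).ne' ENNReal.ofReal_ne_top, one_smul]
  have hint2 : Integrable Rt (haarAddCircle : Measure (AddCircle (2*Real.pi))) := by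
    rw [hμ]
    exact hint1.smul_measure (by simp [Real.pi_pos])
  set X : Lp ℂ 1 (haarAddCircle : Measure (AddCircle (2*Real.pi))) :=
    (memLp_one_iff_integrable.mpr hint2).toLp Rt with hX
  set δ : ℝ := ε / (2*Real.pi + 1) with hδ
  have hδpos : 0 < δ := by positivity
  have hdense := span_fourierLp_closure_eq_top (T := 2*Real.pi) (p := 1) (by simp)
  have hXmem : X ∈ closure ((Submodule.span ℂ
      (Set.range (@fourierLp (2*Real.pi) hT 1 _))) : Set (Lp ℂ 1 (haarAddCircle
        : Measure (AddCircle (2*Real.pi))))) := by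
    rw [← Submodule.topologicalClosure_coe, hdense]
    trivial
  obtain ⟨P₁, hP₁span, hdist⟩ := Metric.mem_closure_iff.mp hXmem δ hδpos
  obtain ⟨c, hc⟩ := Finsupp.mem_span_range_iff_exists_finsupp.mp hP₁span
  refine ⟨c, ?_⟩
  rw [Finsupp.sum] at hc
  -- coeFn of the trig polynomial
  have hPae : ∀ s : Finset ℤ, ⇑(∑ k ∈ s, c k • @fourierLp (2*Real.pi) hT 1 _ k)
      =ᵐ[(haarAddCircle : Measure (AddCircle (2*Real.pi)))]
      fun x => ∑ k ∈ s, c k • fourier k x := by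
    intro s
    induction s using Finset.induction_on with
    | empty => simp only [Finset.sum_empty]; exact Lp.coeFn_zero ℂ 1 _
    | @insert a s ha ih =>
      simp only [Finset.sum_insert ha]
      filter_upwards [Lp.coeFn_add (c a • @fourierLp (2*Real.pi) hT 1 _ a)
        (∑ k ∈ s, c k • @fourierLp (2*Real.pi) hT 1 _ k),
        Lp.coeFn_smul (c a) (@fourierLp (2*Real.pi) hT 1 _ a),
        coeFn_fourierLp 1 a, ih] with x h1 h2 h3 h4
      rw [h1, Pi.add_apply, h2, Pi.smul_apply, h3, h4]
  set Pfun : AddCircle (2*Real.pi) → ℂ := fun x => ∑ k ∈ c.support, c k • fourier k x with hPfun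
  have hXP : ‖X - P₁‖ = ∫ x, ‖Rt x - Pfun x‖ ∂(haarAddCircle
      : Measure (AddCircle (2*Real.pi))) := by
    rw [L1.norm_eq_integral_norm]
    apply integral_congr_ae
    filter_upwards [Lp.coeFn_sub X P₁, MemLp.coeFn_toLp (memLp_one_iff_integrable.mpr hint2),
      hPae c.support] with x h1 h2 h3
    rw [h1, Pi.sub_apply, h2]
    rw [hc] at h3
    rw [h3]
  have hhaar : (∫ x, ‖Rt x - Pfun x‖ ∂(haarAddCircle
      : Measure (AddCircle (2*Real.pi)))) < δ := by
    rw [← hXP]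
    rw [← dist_eq_norm]
    exact hdist
  have hvol : (∫ x, ‖Rt x - Pfun x‖ ∂(volume : Measure (AddCircle (2*Real.pi))))
      = (2*Real.pi) * ∫ x, ‖Rt x - Pfun x‖ ∂(haarAddCircle
        : Measure (AddCircle (2*Real.pi))) := by
    rw [AddCircle.volume_eq_smul_haarAddCircle, integral_smul_measure,
      ENNReal.toReal_ofReal (by positivity), smul_eq_mul]
  have hIoc : (∫ θ in Ioc (0:ℝ) (0 + 2*Real.pi), ‖Rt ↑θ - Pfun ↑θ‖)
      = ∫ x, ‖Rt x - Pfun x‖ ∂(volume : Measure (AddCircle (2*Real.pi))) :=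
    AddCircle.integral_preimage (2*Real.pi) 0 (fun x => ‖Rt x - Pfun x‖)
  have hfinal : (∫ θ in Ioc (0:ℝ) (2*Real.pi), ‖R θ - ∑ k ∈ c.support, c k * E' k θ‖)
      = ∫ θ in Ioc (0:ℝ) (0 + 2*Real.pi), ‖Rt ↑θ - Pfun ↑θ‖ := by
    simp only [zero_add]
    apply integral_congr_ae
    filter_upwards [haeR, self_mem_ae_restrict (measurableSet_Ioc
      : MeasurableSet (Ioc (0:ℝ) (2*Real.pi)))] with θ h1 h2
    rw [h1, hmkc θ (by simpa using h2)]
    congr 2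
    apply Finset.sum_congr rfl
    intro k _
    rw [smul_eq_mul, fourier_eq]
  rw [hfinal, hIoc, hvol]
  calc 2*Real.pi * ∫ x, ‖Rt x - Pfun x‖ ∂(haarAddCircle
      : Measure (AddCircle (2*Real.pi))) < 2*Real.pi * δ := by
        apply mul_lt_mul_of_pos_left hhaar (by positivity)
    _ ≤ ε := by
        rw [hδ, ← mul_div_assoc, div_le_iff₀ (by positivity : (0:ℝ) < 2*Real.pi + 1)]
        nlinarith [Real.pi_pos, hε]
  

private lemma weak_conv (M : ℝ) (hM : 0 ≤ M) (u : ℕ → ℝ → ℂ) (v : ℝ → ℂ)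
    (hu_meas : ∀ n, AEStronglyMeasurable (u n) (volume.restrict (Ioc (0:ℝ) (2*Real.pi))))
    (hv_meas : AEStronglyMeasurable v (volume.restrict (Ioc (0:ℝ) (2*Real.pi))))
    (hu_bd : ∀ n, ∀ᵐ θ ∂(volume.restrict (Ioc (0:ℝ) (2*Real.pi))), ‖u n θ‖ ≤ M)
    (hv_bd : ∀ᵐ θ ∂(volume.restrict (Ioc (0:ℝ) (2*Real.pi))), ‖v θ‖ ≤ M)
    (hfc : ∀ k : ℤ, Tendsto (fun n => ∫ θ in Ioc (0:ℝ) (2*Real.pi), u n θ * E' k θ) atTop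
      (𝓝 (∫ θ in Ioc (0:ℝ) (2*Real.pi), v θ * E' k θ)))
    (R : ℝ → ℂ) (hR : IntegrableOn R (Ioc (0:ℝ) (2*Real.pi)) volume) :
    Tendsto (fun n => ∫ θ in Ioc (0:ℝ) (2*Real.pi), u n θ * R θ) atTop
      (𝓝 (∫ θ in Ioc (0:ℝ) (2*Real.pi), v θ * R θ)) := by
  rw [Metric.tendsto_atTop]
  intro ε hε
  set q : ℝ := ε / (3*(M+1)) with hq
  have hqpos : 0 < q := by positivity
  have hqe : (M+1) * q = ε/3 := by
    rw [hq]
    field_simp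
  obtain ⟨c, hc⟩ := trig_approx R hR hqpos
  set P : ℝ → ℂ := fun θ => ∑ k ∈ c.support, c k * E' k θ with hP
  have hPint : IntegrableOn P (Ioc (0:ℝ) (2*Real.pi)) volume := by
    apply integrable_finset_sum
    intro k _
    exact ((contE k).integrableOn_Ioc).const_mul (c k)
  have hRP : IntegrableOn (fun θ => R θ - P θ) (Ioc (0:ℝ) (2*Real.pi)) volume := hR.sub hPint
  -- splitting identity
  have hsplit : ∀ w : ℝ → ℂ, AEStronglyMeasurable w (volume.restrict (Ioc (0:ℝ) (2*Real.pi))) →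
      (∀ᵐ θ ∂(volume.restrict (Ioc (0:ℝ) (2*Real.pi))), ‖w θ‖ ≤ M) →
      (∫ θ in Ioc (0:ℝ) (2*Real.pi), w θ * R θ)
        = (∫ θ in Ioc (0:ℝ) (2*Real.pi), w θ * (R θ - P θ))
          + ∑ k ∈ c.support, c k * ∫ θ in Ioc (0:ℝ) (2*Real.pi), w θ * E' k θ := by
    intro w hw hwb
    have h1 : (∫ θ in Ioc (0:ℝ) (2*Real.pi), w θ * R θ)
        = (∫ θ in Ioc (0:ℝ) (2*Real.pi), (w θ * (R θ - P θ) + w θ * P θ)) := by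
      apply integral_congr_ae
      filter_upwards with θ
      ring
    rw [h1, integral_add (hRP.bdd_mul hw hwb) (hPint.bdd_mul hw hwb)]
    congr 1
    have h2 : (∫ θ in Ioc (0:ℝ) (2*Real.pi), w θ * P θ)
        = ∫ θ in Ioc (0:ℝ) (2*Real.pi), ∑ k ∈ c.support, c k * (w θ * E' k θ) := by
      apply integral_congr_ae
      filter_upwards with θ
      rw [hP, Finset.mul_sum]
      apply Finset.sum_congr rfl
      intro k _
      ring
    rw [h2, integral_finset_sum]
    · apply Finset.sum_congr rfl
      intro k _
      rw [MeasureTheory.integral_const_mul]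
    · intro k _
      exact ((((contE k).integrableOn_Ioc).bdd_mul hw hwb)).const_mul (c k)
  -- norm bound
  have hbound : ∀ w : ℝ → ℂ, AEStronglyMeasurable w (volume.restrict (Ioc (0:ℝ) (2*Real.pi))) →
      (∀ᵐ θ ∂(volume.restrict (Ioc (0:ℝ) (2*Real.pi))), ‖w θ‖ ≤ M) →
      ‖∫ θ in Ioc (0:ℝ) (2*Real.pi), w θ * (R θ - P θ)‖ < ε/3 := by
    intro w hw hwb
    have h1 : ‖∫ θ in Ioc (0:ℝ) (2*Real.pi), w θ * (R θ - P θ)‖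
        ≤ ∫ θ in Ioc (0:ℝ) (2*Real.pi), M * ‖R θ - P θ‖ := by
      apply norm_integral_le_of_norm_le (hRP.norm.const_mul M)
      filter_upwards [hwb] with θ hθ
      rw [norm_mul]
      exact mul_le_mul_of_nonneg_right hθ (norm_nonneg _)
    rw [integral_const_mul] at h1
    calc ‖∫ θ in Ioc (0:ℝ) (2*Real.pi), w θ * (R θ - P θ)‖
        ≤ M * ∫ θ in Ioc (0:ℝ) (2*Real.pi), ‖R θ - P θ‖ := h1
      _ ≤ M * q := mul_le_mul_of_nonneg_left hc.le hM
      _ < (M+1) * q := mul_lt_mul_of_pos_right (lt_add_one M) hqpos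
      _ = ε/3 := hqe
  -- convergence of trig sums
  have hS : Tendsto (fun n => ∑ k ∈ c.support, c k * ∫ θ in Ioc (0:ℝ) (2*Real.pi),
      u n θ * E' k θ) atTop
      (𝓝 (∑ k ∈ c.support, c k * ∫ θ in Ioc (0:ℝ) (2*Real.pi), v θ * E' k θ)) := by
    apply tendsto_finset_sum
    intro k _
    exact (hfc k).const_mul (c k)
  obtain ⟨N, hN⟩ := Metric.tendsto_atTop.mp hS (ε/3) (by positivity)
  refine ⟨N, fun n hn => ?_⟩
  have h1 := hsplit (u n) (hu_meas n) (hu_bd n)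
  have h2 := hsplit v hv_meas hv_bd
  have e1 := hbound (u n) (hu_meas n) (hu_bd n)
  have e2 := hbound v hv_meas hv_bd
  have e3 := hN n hn
  rw [dist_eq_norm] at e3 ⊢
  rw [h1, h2]
  set a1 := ∫ θ in Ioc (0:ℝ) (2*Real.pi), u n θ * (R θ - P θ)
  set a2 := ∫ θ in Ioc (0:ℝ) (2*Real.pi), v θ * (R θ - P θ)
  set S1 := ∑ k ∈ c.support, c k * ∫ θ in Ioc (0:ℝ) (2*Real.pi), u n θ * E' k θ
  set S2 := ∑ k ∈ c.support, c k * ∫ θ in Ioc (0:ℝ) (2*Real.pi), v θ * E' k θ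
  have : a1 + S1 - (a2 + S2) = a1 + (S1 - S2) + (-a2) := by ring
  rw [this]
  calc ‖a1 + (S1 - S2) + (-a2)‖ ≤ ‖a1 + (S1 - S2)‖ + ‖-a2‖ := norm_add_le _ _
    _ ≤ ‖a1‖ + ‖S1 - S2‖ + ‖-a2‖ := by
        apply add_le_add_left (norm_add_le _ _)
    _ < ε/3 + ε/3 + ε/3 := by
        rw [norm_neg]
        exact add_lt_add (add_lt_add e1 e3) e2
    _ = ε := by ring


/-- Khavinson's theorem. -/
theorem stmt2 (M : ℝ) (f : ℕ → ℂ → ℂ) (g : ℂ → ℂ)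
    (hf : ∀ n, DifferentiableOn ℂ (f n) (ball (0 : ℂ) 1))
    (hbd : ∀ n, ∀ z ∈ ball (0 : ℂ) 1, ‖f n z‖ ≤ M)
    (hconv : ∀ z ∈ ball (0 : ℂ) 1, Tendsto (fun n => f n z) atTop (𝓝 (g z)))
    (fstar : ℕ → ℂ → ℂ) (gstar : ℂ → ℂ)
    (hfstar : ∀ n, IsRadialBoundary (f n) (fstar n))
    (hgstar : IsRadialBoundary g gstar) :
    WeakStarTo fstar gstar := by
  intro Q hQ
  have h2π : (0:ℝ) ≤ 2*Real.pi := by positivity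
  set R : ℝ → ℂ := fun θ => circleMap 0 1 θ * I * Q (circleMap 0 1 θ) with hRdef
  have hQint : MeasureTheory.IntegrableOn (fun θ : ℝ => Q (circleMap 0 1 θ))
      (Set.Ioc (0:ℝ) (2*Real.pi)) volume :=
    (intervalIntegrable_iff_integrableOn_Ioc_of_le h2π).mp hQ
  have hRint : MeasureTheory.IntegrableOn R (Set.Ioc (0:ℝ) (2*Real.pi)) volume := by
    apply hQint.bdd_mul (c := 1)
    · exact Continuous.aestronglyMeasurable (by fun_prop)
    · filter_upwards with θ
      simp [norm_circleMap_zero]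
  have key : ∀ h : ℂ → ℂ, (∮ z in C(0, 1), h z * Q z)
      = ∫ θ in Set.Ioc (0:ℝ) (2*Real.pi), h (circleMap 0 1 θ) * R θ := by
    intro h
    rw [circleIntegral, intervalIntegral.integral_of_le h2π]
    apply MeasureTheory.integral_congr_ae
    filter_upwards with θ
    rw [deriv_circleMap, smul_eq_mul, hRdef]
    ring
  have hM : 0 ≤ M := le_trans (norm_nonneg (f 0 0)) (hbd 0 0 (by simp))
  have hgb : ∀ z ∈ ball (0:ℂ) 1, ‖g z‖ ≤ M := fun z hz =>
    le_of_tendsto (hconv z hz).norm (Filter.Eventually.of_forall fun n => hbd n z hz)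
  have hfcm : ∀ n (j : ℕ), AEStronglyMeasurable
      (fun θ : ℝ => f n ((ρ' j :ℂ) * circleMap 0 1 θ))
      (volume.restrict (Set.Ioc (0:ℝ) (2*Real.pi))) := fun n j =>
    (cont_circ (f n) (hf n) (ρ'_mem j).1.le (ρ'_mem j).2).aestronglyMeasurable
  have hgc : ∀ j : ℕ, AEStronglyMeasurable (fun θ : ℝ => g ((ρ' j :ℂ) * circleMap 0 1 θ))
      (volume.restrict (Set.Ioc (0:ℝ) (2*Real.pi))) := by
    intro j
    apply aestronglyMeasurable_of_tendsto_ae atTop (fun n => hfcm n j)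
    filter_upwards with θ
    exact hconv _ (mem_ball_radial (ρ'_mem j).1.le (ρ'_mem j).2 θ)
  simp only [key]
  apply weak_conv M hM
    (fun n => fun θ => fstar n (circleMap 0 1 θ)) (fun θ => gstar (circleMap 0 1 θ))
    (fun n => aesm_radial (f n) (fstar n) (hfcm n) (hfstar n))
    (aesm_radial g gstar hgc hgstar)
    (fun n => bound_radial (f n) (fstar n) M (hbd n) (hfstar n))
    (bound_radial g gstar M hgb hgstar)
    (fourier_conv M f g hf hbd hconv fstar gstar hfstar hgstar)
    R hRint

end
end KhavinsonAux
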